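/- Let H be a finite connected simple graph with vertex set V, and let r, r' ∈ V. Define P_H(r) = {x ∈ ℝ^V : x_r = 0 and |x(u) − x(v)| ≤ 1 for every edge uv of H}, and similarly P_H(r'). Then the (|V|−1)-dimensional Lebesgue volumes of P_H(r) and P_H(r') are equal. -/

import Mathlib

open MeasureTheory
open scoped ENNReal

noncomputable section

/-- The rooted Lipschitz polytope of a connected graph `H` with root `r`. -/
def rootedPolytope {V : Type*} (H : SimpleGraph V) (r : V) : Set (V → ℝ) :=
  {x | x r = 0 ∧ ∀ u v, H.Adj u v → |x u - x v| ≤ 1}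

/-- The `(|V|−1)`-dimensional volume of the rooted Lipschitz polytope: the Lebesgue
measure of its image under the coordinate projection forgetting the `r`-coordinate. -/
def rootedVol {V : Type*} [Fintype V] [DecidableEq V] (H : SimpleGraph V) (r : V) : ℝ≥0∞ :=
  volume ((fun (x : V → ℝ) (v : {v : V // v ≠ r}) => x v.1) '' rootedPolytope H r)

/-- The rooted Lipschitz volume of a connected graph does not depend on the root. -/
theorem stmt_19 {V : Type*} [Fintype V] [DecidableEq V] (H : SimpleGraph V)
    (hconn : H.Connected) (r r' : V) :
    rootedVol H r = rootedVol H r' := by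
  rcases eq_or_ne r r' with rfl | h
  · rfl
  -- the root vertex r' as an element of the index type {v // v ≠ r}
  set rr : {v : V // v ≠ r} := ⟨r', h.symm⟩ with hrr
  -- the shear linear map
  set S : (({v : V // v ≠ r}) → ℝ) →ₗ[ℝ] (({v : V // v ≠ r}) → ℝ) :=
    { toFun := fun y u => (if u.1 = r' then 0 else y u) - y rr
      map_add' := by
        intro y z; funext u; simp only [Pi.add_apply]; split_ifs <;> ring
      map_smul' := by
        intro c y; funext u; simp only [Pi.smul_apply, smul_eq_mul, RingHom.id_apply]
        split_ifs <;> ring } with hS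
  have hSapp : ∀ y u, S y u = (if u.1 = r' then 0 else y u) - y rr := fun _ _ => rfl
  -- S is an involution
  have hSS : S ∘ₗ S = LinearMap.id := by
    apply LinearMap.ext; intro y; funext u
    simp only [LinearMap.comp_apply, LinearMap.id_apply]
    rw [hSapp, hSapp, hSapp]
    rcases eq_or_ne u.1 r' with hu | hu
    · have : u = rr := Subtype.ext hu
      subst this
      simp [hu]
    · simp [hu, hrr]
  have hdet : ENNReal.ofReal |LinearMap.det S| = 1 := by
    have h2 : LinearMap.det S * LinearMap.det S = 1 := by
      rw [← LinearMap.det_comp, hSS, LinearMap.det_id]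
    have : |LinearMap.det S| = 1 := by nlinarith [abs_nonneg (LinearMap.det S), abs_mul_abs_self (LinearMap.det S)]
    rw [this]; simp
  -- relabeling equivalence
  set e : {v : V // v ≠ r} ≃ {v : V // v ≠ r'} :=
    (Equiv.swap r r').subtypeEquiv (fun v => not_congr
      (((Equiv.swap r r').apply_eq_iff_eq_symm_apply.trans (by simp)).symm)) with he
  set F : (({v : V // v ≠ r}) → ℝ) ≃ᵐ (({v : V // v ≠ r'}) → ℝ) :=
    MeasurableEquiv.piCongrLeft (fun _ => ℝ) e with hF
  have hFapp : ∀ (y : ({v : V // v ≠ r}) → ℝ) (u' : {v : V // v ≠ r'}),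
      F y u' = y (e.symm u') := by
    intro y u'
    conv_lhs => rw [show u' = e (e.symm u') by simp]
    exact MeasurableEquiv.piCongrLeft_apply_apply (β := fun _ : {v : V // v ≠ r'} => ℝ) e y (e.symm u')
  have hesymm : ∀ u' : {v : V // v ≠ r'}, (e.symm u').1 = Equiv.swap r r' u'.1 := by
    intro u'
    simp [he, Equiv.subtypeEquiv, Equiv.symm_swap]
  -- key pointwise computation
  have key : ∀ x : V → ℝ, x r = 0 →
      F (S (fun u : {v : V // v ≠ r} => x u.1)) =
        fun u' : {v : V // v ≠ r'} => x u'.1 - x r' := by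
    intro x hx; funext u'
    rw [hFapp, hSapp]
    rcases eq_or_ne u'.1 r with hu | hu
    · have h1 : (e.symm u').1 = r' := by rw [hesymm, hu, Equiv.swap_apply_left]
      rw [if_pos h1, hu, hx, hrr]
    · have h1 : (e.symm u').1 = u'.1 := by
        rw [hesymm, Equiv.swap_apply_of_ne_of_ne hu u'.2]
      rw [if_neg (h1 ▸ u'.2), h1, hrr]
  -- set identity
  have hset : F '' (S '' ((fun (x : V → ℝ) (v : {v : V // v ≠ r}) => x v.1) '' rootedPolytope H r))
      = (fun (x : V → ℝ) (v : {v : V // v ≠ r'}) => x v.1) '' rootedPolytope H r' := by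
    rw [← Set.image_comp, ← Set.image_comp]
    apply Set.Subset.antisymm
    · rintro _ ⟨x, hx, rfl⟩
      refine ⟨fun v => x v - x r', ⟨by simp, fun u v huv => by
        simpa using hx.2 u v huv⟩, ?_⟩
      simp only [Function.comp_apply]
      rw [key x hx.1]
    · rintro _ ⟨x', hx', rfl⟩
      refine ⟨fun v => x' v - x' r, ⟨by simp [hx'.1], fun u v huv => by
        simpa using hx'.2 u v huv⟩, ?_⟩
      simp only [Function.comp_apply]
      rw [key (fun v => x' v - x' r) (sub_self _)]
      funext u'
      simp [hx'.1]
  -- measure computations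
  have hvolF : ∀ s : Set (({v : V // v ≠ r}) → ℝ), volume (F '' s) = volume s := by
    intro s
    have hmp := (volume_measurePreserving_piCongrLeft (fun _ : {v : V // v ≠ r'} => ℝ) e).map_eq
    calc volume (F '' s) = (Measure.map F volume) (F '' s) := by rw [hmp]
      _ = volume (F ⁻¹' (F '' s)) := MeasurableEquiv.map_apply F _
      _ = volume s := by rw [Set.preimage_image_eq _ F.injective]
  have hvolS : ∀ s : Set (({v : V // v ≠ r}) → ℝ), volume (S '' s) = volume s := by
    intro s
    rw [Measure.addHaar_image_linearMap volume S s, hdet, one_mul]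
  rw [rootedVol, rootedVol, ← hset, hvolF, hvolS]

end
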